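/- Let Y be a metrizable topological space with its Borel σ-algebra, let (E m)_{m ∈ ℕ} be a family of finite-dimensional real inner product spaces, and let Φ : Y → lp E 2 be a continuous map with ‖Φ(y)‖ ≤ C for all y ∈ Y. If (μ_n)_{n ∈ ℕ} and μ are Borel probability measures on Y such that μ_n → μ in the topology of weak convergence, then the Bochner integrals converge: ‖∫ Φ dμ_n − ∫ Φ dμ‖ → 0 as n → ∞. (The content of Proposition D.1(2)/Theorem 6.6(4): when every level of the feature space is finite-dimensional, weak convergence of probability measures implies convergence of the kernel mean embeddings, i.e. convergence in the MMD d_k for k(x,y) = ⟪Φ(x), Φ(y)⟫.) -/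

import Mathlib

open MeasureTheory Filter TopologicalSpace
open scoped BoundedContinuousFunction Topology ENNReal

namespace Stmt15Aux

variable {E : ℕ → Type*} [∀ m, NormedAddCommGroup (E m)] [∀ m, InnerProductSpace ℝ (E m)]

noncomputable def evalCLM (m : ℕ) : lp E 2 →L[ℝ] E m :=
  LinearMap.mkContinuous
    { toFun := fun f => f m
      map_add' := fun f g => congrFun (lp.coeFn_add f g) m
      map_smul' := fun c f => congrFun (lp.coeFn_smul c f) m }
    1 (fun f => by
      simpa using lp.norm_apply_le_norm (by norm_num : (2:ℝ≥0∞) ≠ 0) f m)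

omit [(m : ℕ) → InnerProductSpace ℝ (E m)] in
lemma norm_single' (m : ℕ) (a : E m) : ‖(lp.single 2 m a : lp E 2)‖ = ‖a‖ := by
  classical
  have h2 : (0:ℝ) < (2:ℝ≥0∞).toReal := by norm_num
  simpa using lp.norm_single h2 (Pi.single m a) m

noncomputable def singleCLM (m : ℕ) : E m →L[ℝ] lp E 2 :=
  LinearMap.mkContinuous
    { toFun := fun a => lp.single 2 m a
      map_add' := fun a b => by
        apply lp.ext; funext j
        by_cases h : j = m
        · subst h
          simp [lp.single_apply_self, lp.coeFn_add]
        · simp [lp.single_apply_ne 2 m _ h, lp.coeFn_add]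
      map_smul' := fun c a => by simp [lp.single_smul] }
    1 (fun a => by simp [norm_single'])

noncomputable def truncCLM (M : ℕ) : lp E 2 →L[ℝ] lp E 2 :=
  ∑ m ∈ Finset.range M, (singleCLM m).comp (evalCLM (E := E) m)

lemma truncCLM_eq (M : ℕ) (f : lp E 2) :
    truncCLM M f = ∑ m ∈ Finset.range M, lp.single 2 m (f m) := by
  simp only [truncCLM, ContinuousLinearMap.sum_apply, ContinuousLinearMap.comp_apply]
  rfl

lemma norm_sub_trunc_le (M : ℕ) (f : lp E 2) : ‖f - truncCLM M f‖ ≤ ‖f‖ := by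
  have h2 : (0:ℝ) < (2:ℝ≥0∞).toReal := by norm_num
  have key := lp.norm_compl_sum_single h2 f (Finset.range M)
  have conv2 : ∀ x : ℝ, x ^ (2:ℝ≥0∞).toReal = x ^ (2:ℕ) := fun x => by
    rw [show (2:ℝ≥0∞).toReal = ((2:ℕ):ℝ) by norm_num, Real.rpow_natCast]
  rw [truncCLM_eq] at *
  have hnn : (0:ℝ) ≤ ∑ m ∈ Finset.range M, ‖f m‖ ^ (2:ℝ≥0∞).toReal :=
    Finset.sum_nonneg fun i _ => Real.rpow_nonneg (norm_nonneg _) _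
  rw [conv2, conv2] at key
  nlinarith [norm_nonneg (f - ∑ m ∈ Finset.range M, lp.single 2 m (f m)), norm_nonneg f]

lemma tendsto_trunc (f : lp E 2) :
    Tendsto (fun M => truncCLM (E := E) M f) atTop (𝓝 f) := by
  have h := (lp.hasSum_single (E := E) (p := 2) (by norm_num) f).tendsto_sum_nat
  have heq : (fun M => truncCLM (E := E) M f)
      = fun M => ∑ m ∈ Finset.range M, lp.single 2 m (f m) := by
    funext M; exact truncCLM_eq M f
  rw [heq]
  exact h

lemma separableSpace_lp [∀ m, FiniteDimensional ℝ (E m)] : SeparableSpace (lp E 2) := by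
  rw [← isSeparable_univ_iff]
  have hS : IsSeparable (⋃ m, Set.range fun a : E m => (lp.single 2 m a : lp E 2)) :=
    .iUnion fun m => isSeparable_range (singleCLM m).continuous
  have hcl := (hS.span (R := ℝ)).closure
  refine hcl.mono fun f _ => ?_
  refine mem_closure_of_tendsto (tendsto_trunc f) (Eventually.of_forall fun M => ?_)
  rw [truncCLM_eq]
  exact Submodule.sum_mem _ fun m _ =>
    Submodule.subset_span (Set.mem_iUnion.2 ⟨m, Set.mem_range_self _⟩)

lemma tendsto_integral_bcf {Y : Type*} [TopologicalSpace Y] [MeasurableSpace Y]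
    [OpensMeasurableSpace Y]
    {V : Type*} [NormedAddCommGroup V] [NormedSpace ℝ V] [FiniteDimensional ℝ V]
    {μs : ℕ → ProbabilityMeasure Y} {μ : ProbabilityMeasure Y}
    (h : Tendsto μs atTop (𝓝 μ)) (F : Y →ᵇ V) :
    Tendsto (fun n => ∫ y, F y ∂(μs n : Measure Y)) atTop
      (𝓝 (∫ y, F y ∂(μ : Measure Y))) := by
  classical
  borelize V
  set b := Module.finBasis ℝ V with hb
  set e := b.equivFunL with he
  have hint : ∀ (ν : Measure Y) [IsProbabilityMeasure ν], Integrable F ν := fun ν _ =>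
    F.integrable ν
  set φ : Fin (Module.finrank ℝ V) → (V →L[ℝ] ℝ) :=
    fun i => (ContinuousLinearMap.proj (R := ℝ) (φ := fun _ : Fin (Module.finrank ℝ V) => ℝ)
      i).comp e.toContinuousLinearMap with hφ
  have coord : ∀ (ν : Measure Y) [IsProbabilityMeasure ν] (i : Fin (Module.finrank ℝ V)),
      e (∫ y, F y ∂ν) i = ∫ y, φ i (F y) ∂ν := by
    intro ν _ i
    rw [(φ i).integral_comp_comm (hint ν)]
    rfl
  have key : Tendsto (fun n => e (∫ y, F y ∂(μs n : Measure Y))) atTop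
      (𝓝 (e (∫ y, F y ∂(μ : Measure Y)))) := by
    rw [tendsto_pi_nhds]
    intro i
    have hreal := ProbabilityMeasure.tendsto_iff_forall_integral_tendsto.mp h
      (BoundedContinuousFunction.comp _ (φ i).lipschitz F)
    simp only [coord]
    exact hreal
  have h2 := (e.symm.toContinuousLinearMap.continuous.tendsto _).comp key
  simp only [Function.comp_def, ContinuousLinearEquiv.coe_coe] at h2
  simpa using h2

end Stmt15Aux

open Stmt15Aux

set_option maxHeartbeats 1000000 in
/-- Proposition D.1(2) / Theorem 6.6(4): if every level `E m` of the feature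
space `lp E 2` is finite-dimensional and `Φ : Y → lp E 2` is a continuous
bounded feature map on a metrizable space `Y`, then weak convergence of Borel
probability measures `μ_n → μ` implies convergence of the kernel mean
embeddings `∫ Φ dμ_n → ∫ Φ dμ`, i.e. convergence in the MMD. -/
theorem stmt_15 {Y : Type*} [TopologicalSpace Y] [TopologicalSpace.MetrizableSpace Y]
    [MeasurableSpace Y] [BorelSpace Y]
    {E : ℕ → Type*} [∀ m, NormedAddCommGroup (E m)] [∀ m, InnerProductSpace ℝ (E m)]
    [∀ m, FiniteDimensional ℝ (E m)]
    (Φ : Y → lp E 2) (hΦcont : Continuous Φ)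
    (C : ℝ) (hΦbdd : ∀ y, ‖Φ y‖ ≤ C)
    (μs : ℕ → ProbabilityMeasure Y) (μ : ProbabilityMeasure Y)
    (hconv : Filter.Tendsto μs Filter.atTop (nhds μ)) :
    Filter.Tendsto
      (fun n => ‖(∫ y, Φ y ∂(μs n : Measure Y)) - ∫ y, Φ y ∂(μ : Measure Y)‖)
      Filter.atTop (nhds 0) := by
  classical
  haveI : SeparableSpace (lp E 2) := separableSpace_lp
  haveI : SecondCountableTopology (lp E 2) :=
    UniformSpace.secondCountable_of_separable _
  have hsm : StronglyMeasurable Φ := hΦcont.stronglyMeasurable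
  have hint : ∀ (ν : Measure Y) [IsProbabilityMeasure ν], Integrable Φ ν := fun ν _ =>
    Integrable.mono' (integrable_const C) hsm.aestronglyMeasurable (ae_of_all _ hΦbdd)
  have hintT : ∀ (M : ℕ) (ν : Measure Y) [IsProbabilityMeasure ν],
      Integrable (fun y => truncCLM M (Φ y)) ν := fun M ν _ =>
    (truncCLM M).integrable_comp (hint ν)
  rw [← tendsto_iff_norm_sub_tendsto_zero]
  rw [Metric.tendsto_atTop]
  intro ε hε
  -- Choose a truncation level M with small tail integral w.r.t. μ
  have htail : Tendsto (fun M => ∫ y, ‖Φ y - truncCLM M (Φ y)‖ ∂(μ : Measure Y)) atTop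
      (𝓝 0) := by
    have h0 : (0 : ℝ) = ∫ y, (0:ℝ) ∂(μ : Measure Y) := by simp
    rw [h0]
    apply tendsto_integral_of_dominated_convergence (fun _ => C)
    · intro M
      exact ((hΦcont.sub ((truncCLM M).continuous.comp hΦcont)).stronglyMeasurable).norm.aestronglyMeasurable
    · exact integrable_const C
    · intro M
      refine ae_of_all _ fun y => ?_
      have := norm_sub_trunc_le M (Φ y)
      simpa [abs_of_nonneg (norm_nonneg _)] using this.trans (hΦbdd y)
    · refine ae_of_all _ fun y => ?_
      have h1 : Tendsto (fun M => Φ y - truncCLM M (Φ y)) atTop (𝓝 (Φ y - Φ y)) :=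
        (tendsto_const_nhds (x := Φ y)).sub (tendsto_trunc (Φ y))
      rw [sub_self] at h1
      simpa using h1.norm
  obtain ⟨M, hM⟩ := (htail.eventually (gt_mem_nhds (by positivity : (0:ℝ) < ε/4))).exists
  -- The tail function as a bounded continuous function
  set g : Y →ᵇ ℝ := BoundedContinuousFunction.ofNormedAddCommGroup
      (fun y => ‖Φ y - truncCLM M (Φ y)‖)
      ((hΦcont.sub ((truncCLM M).continuous.comp hΦcont)).norm) C
      (fun y => by
        simpa [abs_of_nonneg (norm_nonneg _)] using
          (norm_sub_trunc_le M (Φ y)).trans (hΦbdd y)) with hg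
  have hgconv : Tendsto (fun n => ∫ y, g y ∂(μs n : Measure Y)) atTop
      (𝓝 (∫ y, g y ∂(μ : Measure Y))) :=
    ProbabilityMeasure.tendsto_iff_forall_integral_tendsto.mp hconv g
  have hgcoe : ∀ y, g y = ‖Φ y - truncCLM M (Φ y)‖ := fun y => rfl
  have hglim : (∫ y, g y ∂(μ : Measure Y)) < ε/4 := hM
  have hgev : ∀ᶠ n in atTop, (∫ y, g y ∂(μs n : Measure Y)) < ε/4 :=
    hgconv.eventually_lt_const hglim
  -- Convergence of truncated integrals
  have hrep : ∀ (ν : Measure Y) [IsProbabilityMeasure ν],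
      (∫ y, truncCLM M (Φ y) ∂ν)
        = ∑ m ∈ Finset.range M, singleCLM m (∫ y, (Φ y : ∀ i, E i) m ∂ν) := by
    intro ν _
    have h1 : (fun y => truncCLM M (Φ y))
        = fun y => ∑ m ∈ Finset.range M, ((singleCLM m).comp (evalCLM (E := E) m)) (Φ y) := by
      funext y
      simp [truncCLM, ContinuousLinearMap.sum_apply]
    rw [h1, integral_finset_sum _ (fun m _ => ((singleCLM m).comp (evalCLM (E := E) m)).integrable_comp (hint ν))]
    refine Finset.sum_congr rfl fun m _ => ?_
    have h2 : ∫ y, ((singleCLM m).comp (evalCLM (E := E) m)) (Φ y) ∂ν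
        = ((singleCLM m).comp (evalCLM (E := E) m)) (∫ y, Φ y ∂ν) :=
      ((singleCLM m).comp (evalCLM (E := E) m)).integral_comp_comm (hint ν)
    rw [h2, ContinuousLinearMap.comp_apply]
    congr 1
    exact ((evalCLM (E := E) m).integral_comp_comm (hint ν)).symm
  have hcoordconv : ∀ m : ℕ,
      Tendsto (fun n => ∫ y, (Φ y : ∀ i, E i) m ∂(μs n : Measure Y)) atTop
        (𝓝 (∫ y, (Φ y : ∀ i, E i) m ∂(μ : Measure Y))) := by
    intro m
    set Fm : Y →ᵇ E m := BoundedContinuousFunction.ofNormedAddCommGroup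
      (fun y => (Φ y : ∀ i, E i) m) ((evalCLM (E := E) m).continuous.comp hΦcont) C
      (fun y => (lp.norm_apply_le_norm (by norm_num : (2:ℝ≥0∞) ≠ 0) (Φ y) m).trans (hΦbdd y))
      with hFm
    exact tendsto_integral_bcf hconv Fm
  have hT : Tendsto (fun n => ∫ y, truncCLM M (Φ y) ∂(μs n : Measure Y)) atTop
      (𝓝 (∫ y, truncCLM M (Φ y) ∂(μ : Measure Y))) := by
    simp only [hrep]
    exact tendsto_finset_sum _ fun m _ =>
      ((singleCLM m).continuous.tendsto _).comp (hcoordconv m)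
  have hTev : ∀ᶠ n in atTop,
      ‖(∫ y, truncCLM M (Φ y) ∂(μs n : Measure Y)) - ∫ y, truncCLM M (Φ y) ∂(μ : Measure Y)‖
        < ε/4 :=
    (tendsto_iff_norm_sub_tendsto_zero.mp hT).eventually_lt_const (by positivity)
  -- Combine
  have := (hgev.and hTev).exists_forall_of_atTop
  obtain ⟨N, hN⟩ := ((hgev.and hTev).and (eventually_ge_atTop 0)).exists_forall_of_atTop
  refine ⟨N, fun n hn => ?_⟩
  obtain ⟨⟨hg1, hT1⟩, -⟩ := hN n hn
  rw [dist_eq_norm]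
  have hdecomp :
      (∫ y, Φ y ∂(μs n : Measure Y)) - ∫ y, Φ y ∂(μ : Measure Y)
        = (∫ y, (Φ y - truncCLM M (Φ y)) ∂(μs n : Measure Y))
          + ((∫ y, truncCLM M (Φ y) ∂(μs n : Measure Y))
              - ∫ y, truncCLM M (Φ y) ∂(μ : Measure Y))
          - ∫ y, (Φ y - truncCLM M (Φ y)) ∂(μ : Measure Y) := by
    rw [integral_sub (hint _) (hintT M _), integral_sub (hint _) (hintT M _)]
    abel
  have hb1 : ‖∫ y, (Φ y - truncCLM M (Φ y)) ∂(μs n : Measure Y)‖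
      ≤ ∫ y, g y ∂(μs n : Measure Y) := by
    exact norm_integral_le_integral_norm (μ := (μs n : Measure Y))
      (fun y => Φ y - truncCLM M (Φ y))
  have hb2 : ‖∫ y, (Φ y - truncCLM M (Φ y)) ∂(μ : Measure Y)‖
      ≤ ∫ y, g y ∂(μ : Measure Y) := by
    exact norm_integral_le_integral_norm (μ := (μ : Measure Y))
      (fun y => Φ y - truncCLM M (Φ y))
  calc ‖(∫ y, Φ y ∂(μs n : Measure Y)) - ∫ y, Φ y ∂(μ : Measure Y)‖
      ≤ ‖∫ y, (Φ y - truncCLM M (Φ y)) ∂(μs n : Measure Y)‖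
        + ‖(∫ y, truncCLM M (Φ y) ∂(μs n : Measure Y))
            - ∫ y, truncCLM M (Φ y) ∂(μ : Measure Y)‖
        + ‖∫ y, (Φ y - truncCLM M (Φ y)) ∂(μ : Measure Y)‖ := by
        rw [hdecomp]
        exact (norm_sub_le _ _).trans (add_le_add_left (norm_add_le _ _) _)
    _ < ε/4 + ε/4 + ε/4 := by
        have := hb1.trans_lt hg1
        have := hb2.trans_lt hglim
        gcongr
    _ < ε := by linarith
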